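/- Let $\mathcal{C}$ be an additive idempotent complete category, $X$ an additive locally nilpotent endofunctor, $T(X)$ the free monad. An object $M \in \mathcal{C}$ is indecomposable if and only if $f_!(M) \in \mathcal{C}^{T(X)}$ is indecomposable. -/

import Mathlib

open CategoryTheory Limits

universe v u

variable {C : Type u} [Category.{v} C]

/-- The power `X^n` of an endofunctor, with `X^(n+1) = X^n ⋙ X`. -/
def fpow (X : C ⥤ C) : ℕ → (C ⥤ C)
  | 0 => 𝟭 C
  | n + 1 => fpow X n ⋙ X

/-- `X` is locally nilpotent if every object is annihilated by some power of `X`. -/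
def LocallyNilpotent (X : C ⥤ C) : Prop :=
  ∀ M : C, ∃ n : ℕ, IsZero ((fpow X n).obj M)

/-- The category `(X ⇓ Id)` of `X`-modules, identified with the Eilenberg–Moore category
of the free monad on `X`. -/
structure XMod (X : C ⥤ C) : Type max u v where
  carrier : C
  str : X.obj carrier ⟶ carrier

/-- Morphisms of `X`-modules. -/
@[ext]
structure XModHom {X : C ⥤ C} (M N : XMod X) : Type v where
  hom : M.carrier ⟶ N.carrier
  comm : M.str ≫ hom = X.map hom ≫ N.str

instance (X : C ⥤ C) : Category (XMod X) where
  Hom := XModHom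
  id M := ⟨𝟙 M.carrier, by simp⟩
  comp f g := ⟨f.hom ≫ g.hom, by
    rw [← Category.assoc, f.comm, Category.assoc, g.comm, ← Category.assoc, ← Functor.map_comp]⟩
  id_comp f := by apply XModHom.ext; simp [CategoryStruct.id, CategoryStruct.comp]
  comp_id f := by apply XModHom.ext; simp [CategoryStruct.id, CategoryStruct.comp]
  assoc f g h := by apply XModHom.ext; simp [CategoryStruct.comp]

@[simp] lemma XMod.id_hom {X : C ⥤ C} (M : XMod X) : (𝟙 M : XModHom M M).hom = 𝟙 M.carrier := rfl
@[simp] lemma XMod.comp_hom {X : C ⥤ C} {M N P : XMod X} (f : M ⟶ N) (g : N ⟶ P) :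
    (f ≫ g).hom = f.hom ≫ g.hom := rfl

/-- `F` is the free `X`-module `f₁(N)` on `N`, encoded via the universal
property of the free–forgetful adjunction `f₁ ⊣ f⋆`. -/
structure IsFreeXModOn (X : C ⥤ C) (F : XMod X) (N : C) where
  unit : N ⟶ F.carrier
  lift : ∀ (P : XMod X), (N ⟶ P.carrier) → (F ⟶ P)
  fac : ∀ (P : XMod X) (g : N ⟶ P.carrier), unit ≫ (lift P g).hom = g
  uniq : ∀ (P : XMod X) (g : N ⟶ P.carrier) (k : F ⟶ P), unit ≫ k.hom = g → k = lift P g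

/-- An object of a preadditive category is indecomposable if it is nonzero and has no
nontrivial idempotent endomorphisms (in an idempotent complete additive category this is
the usual notion). -/
def IndecObj {D : Type*} [Category D] [Preadditive D] (A : D) : Prop :=
  ¬ IsZero A ∧ ∀ e : A ⟶ A, e ≫ e = e → e = 0 ∨ e = 𝟙 A

variable [Preadditive C] {X : C ⥤ C} [X.Additive]

instance {M N : XMod X} : Zero (XModHom M N) := ⟨⟨0, by simp⟩⟩
instance {M N : XMod X} : Add (XModHom M N) :=
  ⟨fun f g => ⟨f.hom + g.hom, by
    simp [Preadditive.comp_add, Preadditive.add_comp, f.comm, g.comm]⟩⟩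
instance {M N : XMod X} : Neg (XModHom M N) :=
  ⟨fun f => ⟨-f.hom, by simp [Preadditive.comp_neg, Preadditive.neg_comp, f.comm]⟩⟩

instance {M N : XMod X} : AddCommGroup (XModHom M N) where
  add_assoc f g h := by apply XModHom.ext; exact add_assoc _ _ _
  zero_add f := by apply XModHom.ext; exact zero_add _
  add_zero f := by apply XModHom.ext; exact add_zero _
  add_comm f g := by apply XModHom.ext; exact add_comm _ _
  neg_add_cancel f := by apply XModHom.ext; exact neg_add_cancel _
  nsmul := nsmulRec
  zsmul := zsmulRec

instance : Preadditive (XMod X) where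
  homGroup M N := inferInstanceAs (AddCommGroup (XModHom M N))
  add_comp M N P f g h := by apply XModHom.ext; exact Preadditive.add_comp _ _ _ _ _ _
  comp_add M N P f g h := by apply XModHom.ext; exact Preadditive.comp_add _ _ _ _ _ _

@[simp] lemma XMod.zero_hom (M N : XMod X) : (0 : M ⟶ N).hom = 0 := rfl
@[simp] lemma XMod.add_hom {M N : XMod X} (f g : M ⟶ N) : (f + g).hom = f.hom + g.hom := rfl


section AuxFree

/-- `tmap n : X^n F → F` is the `n`-fold structure map. -/
def tmap (X : C ⥤ C) (F : XMod X) : ∀ n : ℕ, (fpow X n).obj F.carrier ⟶ F.carrier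
  | 0 => 𝟙 _
  | n+1 => X.map (tmap X F n) ≫ F.str

/-- The canonical map `X^n (X A) ⟶ X^(n+1) A`. -/
def swapF (X : C ⥤ C) (A : C) : ∀ n : ℕ, (fpow X n).obj (X.obj A) ⟶ (fpow X (n+1)).obj A
  | 0 => 𝟙 _
  | n+1 => X.map (swapF X A n)

lemma tmap_comm {X : C ⥤ C} (F : XMod X) (c : F.carrier ⟶ F.carrier)
    (hc : F.str ≫ c = X.map c ≫ F.str) :
    ∀ n : ℕ, tmap X F n ≫ c = (fpow X n).map c ≫ tmap X F n
  | 0 => by simp [tmap, fpow]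
  | n+1 => by
    show (X.map (tmap X F n) ≫ F.str) ≫ c = X.map ((fpow X n).map c) ≫ X.map (tmap X F n) ≫ F.str
    rw [Category.assoc, hc, ← Category.assoc, ← X.map_comp, tmap_comm F c hc n,
      X.map_comp, Category.assoc]

lemma swap_tmap {X : C ⥤ C} (F : XMod X) :
    ∀ n : ℕ, (fpow X n).map F.str ≫ tmap X F n = swapF X F.carrier n ≫ tmap X F (n+1)
  | 0 => by
    show F.str ≫ 𝟙 _ = 𝟙 _ ≫ X.map (𝟙 _) ≫ F.str
    simp [tmap]
  | n+1 => by
    show X.map ((fpow X n).map F.str) ≫ X.map (tmap X F n) ≫ F.str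
      = X.map (swapF X F.carrier n) ≫ X.map (tmap X F (n+1)) ≫ F.str
    rw [← Category.assoc, ← X.map_comp, swap_tmap F n, X.map_comp, Category.assoc]

end AuxFree

@[simp] lemma XMod.neg_hom {X : C ⥤ C} [Preadditive C] [X.Additive] {M N : XMod X}
    (f : M ⟶ N) : (-f).hom = -f.hom := rfl
@[simp] lemma XMod.sub_hom {X : C ⥤ C} [Preadditive C] [X.Additive] {M N : XMod X}
    (f g : M ⟶ N) : (f - g).hom = f.hom - g.hom := by
  rw [sub_eq_add_neg, sub_eq_add_neg, XMod.add_hom, XMod.neg_hom]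

/-- If an idempotent endomorphism of `F` factors through the structure map, it is zero
(by local nilpotency). -/
lemma idem_factor_eq_zero {X : C ⥤ C} [Preadditive C] [X.Additive]
    (hX : LocallyNilpotent X) {M : C} {F : XMod X} (hF : IsFreeXModOn X F M)
    (e : F ⟶ F) (he : e ≫ e = e)
    (d : F.carrier ⟶ X.obj F.carrier) (hd : e.hom = d ≫ F.str) : e = 0 := by
  have hunit : ∀ n : ℕ, ∃ h : M ⟶ (fpow X n).obj F.carrier,
      hF.unit ≫ e.hom = h ≫ tmap X F n := by
    intro n
    induction n with
    | zero => exact ⟨hF.unit ≫ e.hom, by simp [tmap]; exact (Category.comp_id _).symm⟩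
    | succ n ih =>
      obtain ⟨h, hh⟩ := ih
      refine ⟨h ≫ (fpow X n).map d ≫ swapF X F.carrier n, ?_⟩
      have hee : e.hom ≫ e.hom = e.hom := by
        have := congrArg XModHom.hom he; simpa using this
      calc hF.unit ≫ e.hom = (hF.unit ≫ e.hom) ≫ e.hom := by
            rw [Category.assoc, hee]
        _ = h ≫ tmap X F n ≫ e.hom := by rw [hh, Category.assoc]
        _ = h ≫ (fpow X n).map e.hom ≫ tmap X F n := by rw [tmap_comm F e.hom e.comm n]
        _ = h ≫ (fpow X n).map d ≫ (fpow X n).map F.str ≫ tmap X F n := by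
            rw [hd, (fpow X n).map_comp, Category.assoc]
        _ = (h ≫ (fpow X n).map d ≫ swapF X F.carrier n) ≫ tmap X F (n+1) := by
            rw [swap_tmap F n]; simp only [Category.assoc]
  obtain ⟨n, hn⟩ := hX F.carrier
  obtain ⟨h, hh⟩ := hunit n
  have h0 : h = 0 := hn.eq_of_tgt h 0
  have hzero : hF.unit ≫ e.hom = 0 := by rw [hh, h0, Limits.zero_comp]
  have h1 : e = hF.lift F 0 := hF.uniq F 0 e hzero
  have h2 : (0 : F ⟶ F) = hF.lift F 0 := hF.uniq F 0 0 (by simp)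
  rw [h1, ← h2]

/-- Let `C` be an additive idempotent complete category and `X` an
additive locally nilpotent endofunctor. An object `M` of `C` is indecomposable if and
only if the free module `f₁(M)` is indecomposable in the Eilenberg–Moore category of the
free monad on `X`. -/
theorem indecomposable_iff_free_indecomposable
    [HasFiniteBiproducts C] [IsIdempotentComplete C]
    (hX : LocallyNilpotent X)
    (M : C) (F : XMod X) (hF : IsFreeXModOn X F M) :
    IndecObj M ↔ IndecObj F := by
  classical
  haveI : HasBinaryBiproducts C := hasBinaryBiproducts_of_finite_biproducts C
  -- the degree-zero module `(M, 0)` and the projection `p`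
  set P0 : XMod X := ⟨M, 0⟩ with hP0
  set pi : F ⟶ P0 := hF.lift P0 (𝟙 M) with hpi
  set p : F.carrier ⟶ M := pi.hom with hp
  have hup : hF.unit ≫ p = 𝟙 M := hF.fac P0 (𝟙 M)
  -- key: for any `k : F ⟶ F`, `k.hom ≫ p = p ≫ (unit ≫ k.hom ≫ p)`
  have key : ∀ k : F ⟶ F, k.hom ≫ p = p ≫ (hF.unit ≫ k.hom ≫ p) := by
    intro k
    have h1 : k ≫ pi = hF.lift P0 (hF.unit ≫ k.hom ≫ p) :=
      hF.uniq P0 _ _ (by simp [hp])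
    have h2 : pi ≫ (⟨hF.unit ≫ k.hom ≫ p, by simp [P0]⟩ : P0 ⟶ P0)
        = hF.lift P0 (hF.unit ≫ k.hom ≫ p) :=
      hF.uniq P0 _ _ (by simp [← hp, ← Category.assoc, hup])
    have := congrArg XModHom.hom (h1.trans h2.symm)
    simpa [hp] using this
  -- zero-ness transfer
  have hFM0 : IsZero F → IsZero M := by
    intro hz
    rw [IsZero.iff_id_eq_zero] at hz ⊢
    have hh : (𝟙 F.carrier : F.carrier ⟶ F.carrier) = 0 := by
      have := congrArg XModHom.hom hz; simpa using this
    calc 𝟙 M = hF.unit ≫ p := hup.symm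
      _ = hF.unit ≫ 𝟙 F.carrier ≫ p := by rw [Category.id_comp]
      _ = 0 := by rw [hh]; simp
  have hMF0 : IsZero M → IsZero F := by
    intro hz
    rw [IsZero.iff_id_eq_zero] at hz ⊢
    have hu : hF.unit = 0 := by
      calc hF.unit = 𝟙 M ≫ hF.unit := (Category.id_comp _).symm
        _ = 0 := by rw [hz]; simp
    have h1 : 𝟙 F = hF.lift F 0 := hF.uniq F 0 (𝟙 F) (by simp [hu])
    have h2 : (0 : F ⟶ F) = hF.lift F 0 := hF.uniq F 0 0 (by simp)
    rw [h1, ← h2]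
  -- the biproduct splitting of the free module
  set G : XMod X := ⟨M ⊞ X.obj F.carrier, X.map (biprod.desc hF.unit F.str) ≫ biprod.inr⟩
    with hG
  set u : F ⟶ G := hF.lift G biprod.inl with hu
  set v : G ⟶ F := ⟨biprod.desc hF.unit F.str, by
    show (X.map (biprod.desc hF.unit F.str) ≫ biprod.inr) ≫ biprod.desc hF.unit F.str
      = X.map (biprod.desc hF.unit F.str) ≫ F.str
    rw [Category.assoc, biprod.inr_desc]⟩ with hv
  have hufst : u.hom ≫ biprod.fst = p := by
    have fstmod : G ⟶ P0 := ⟨biprod.fst, by simp [G, P0]⟩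
    have h1 : u ≫ (⟨biprod.fst, by simp [G, P0]⟩ : G ⟶ P0) = hF.lift P0 (𝟙 M) :=
      hF.uniq P0 (𝟙 M) _ (by
        have : hF.unit ≫ u.hom = biprod.inl := hF.fac G biprod.inl
        simp [← Category.assoc, this])
    have := congrArg XModHom.hom h1
    simpa [hp, hpi] using this
  have huv : u ≫ v = 𝟙 F := by
    have h1 : u ≫ v = hF.lift F hF.unit := hF.uniq F hF.unit _ (by
      have : hF.unit ≫ u.hom = biprod.inl := hF.fac G biprod.inl
      simp [hv, ← Category.assoc, this])
    have h2 : 𝟙 F = hF.lift F hF.unit := hF.uniq F hF.unit _ (by simp)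
    rw [h1, ← h2]
  have hsplit : p ≫ hF.unit + (u.hom ≫ biprod.snd) ≫ F.str = 𝟙 F.carrier := by
    have h1 : u.hom ≫ v.hom = 𝟙 F.carrier := by
      have := congrArg XModHom.hom huv; simpa using this
    have h2 : (biprod.desc hF.unit F.str : M ⊞ X.obj F.carrier ⟶ F.carrier)
        = biprod.fst ≫ hF.unit + biprod.snd ≫ F.str := by
      rw [← Category.id_comp (biprod.desc hF.unit F.str), ← biprod.total,
        Preadditive.add_comp]
      simp
    calc p ≫ hF.unit + (u.hom ≫ biprod.snd) ≫ F.str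
        = u.hom ≫ (biprod.fst ≫ hF.unit + biprod.snd ≫ F.str) := by
          rw [Preadditive.comp_add, ← hufst]; simp [Category.assoc]
      _ = u.hom ≫ v.hom := by rw [← h2, hv]
      _ = 𝟙 F.carrier := h1
  -- idempotents with vanishing degree-zero part are zero
  have kill : ∀ e : F ⟶ F, e ≫ e = e → hF.unit ≫ e.hom ≫ p = 0 → e = 0 := by
    intro e he hpsi
    have hep : e.hom ≫ p = 0 := by
      rw [key e, hpsi, Limits.comp_zero]
    have hd : e.hom = (e.hom ≫ u.hom ≫ biprod.snd) ≫ F.str := by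
      calc e.hom = e.hom ≫ 𝟙 F.carrier := (Category.comp_id _).symm
        _ = e.hom ≫ (p ≫ hF.unit + (u.hom ≫ biprod.snd) ≫ F.str) := by rw [hsplit]
        _ = (e.hom ≫ p) ≫ hF.unit + (e.hom ≫ u.hom ≫ biprod.snd) ≫ F.str := by
            rw [Preadditive.comp_add]; simp [Category.assoc]
        _ = (e.hom ≫ u.hom ≫ biprod.snd) ≫ F.str := by rw [hep]; simp
    exact idem_factor_eq_zero hX hF e he _ hd
  constructor
  · rintro ⟨hM0, hMidem⟩
    refine ⟨fun hz => hM0 (hFM0 hz), fun e he => ?_⟩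
    set a : M ⟶ M := hF.unit ≫ e.hom ≫ p with ha
    have hee : e.hom ≫ e.hom = e.hom := by
      have := congrArg XModHom.hom he; simpa using this
    have haa : a ≫ a = a := by
      rw [ha]
      calc (hF.unit ≫ e.hom ≫ p) ≫ hF.unit ≫ e.hom ≫ p
          = hF.unit ≫ e.hom ≫ (p ≫ hF.unit ≫ e.hom ≫ p) := by
            simp only [Category.assoc]
        _ = hF.unit ≫ e.hom ≫ (e.hom ≫ p) := by rw [← key e]
        _ = hF.unit ≫ e.hom ≫ p := by rw [← Category.assoc e.hom, hee]
    rcases hMidem a haa with h0 | h1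
    · left; exact kill e he (by rw [← ha]; exact h0)
    · right
      have he' : (𝟙 F - e) ≫ (𝟙 F - e) = 𝟙 F - e := by
        simp only [Preadditive.sub_comp, Preadditive.comp_sub, Category.id_comp,
          Category.comp_id, he]
        abel
      have hpsi' : hF.unit ≫ (𝟙 F - e).hom ≫ p = 0 := by
        have : (𝟙 F - e).hom = 𝟙 F.carrier - e.hom := by simp
        rw [this, Preadditive.sub_comp, Preadditive.comp_sub, Category.id_comp, ← ha, h1,
          hup, sub_self]
      have := kill (𝟙 F - e) he' hpsi'
      have : e = 𝟙 F := by
        have h := sub_eq_zero.mp this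
        exact h.symm
      exact this
  · rintro ⟨hF0, hFidem⟩
    refine ⟨fun hz => hF0 (hMF0 hz), fun a haa => ?_⟩
    set f : F ⟶ F := hF.lift F (a ≫ hF.unit) with hf
    have hfac : hF.unit ≫ f.hom = a ≫ hF.unit := hF.fac F (a ≫ hF.unit)
    have hff : f ≫ f = f := by
      have h1 : f ≫ f = hF.lift F (a ≫ hF.unit) := hF.uniq F (a ≫ hF.unit) _ (by
        calc hF.unit ≫ (f ≫ f).hom = (hF.unit ≫ f.hom) ≫ f.hom := by simp
          _ = (a ≫ hF.unit) ≫ f.hom := by rw [hfac]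
          _ = a ≫ hF.unit ≫ f.hom := by rw [Category.assoc]
          _ = a ≫ a ≫ hF.unit := by rw [hfac]
          _ = (a ≫ a) ≫ hF.unit := by rw [Category.assoc]
          _ = a ≫ hF.unit := by rw [haa])
      rw [h1, ← hf]
    rcases hFidem f hff with h0 | h1
    · left
      calc a = a ≫ hF.unit ≫ p := by rw [hup, Category.comp_id]
        _ = hF.unit ≫ f.hom ≫ p := by rw [← Category.assoc, ← hfac, Category.assoc]
        _ = 0 := by rw [h0]; simp
    · right
      calc a = a ≫ hF.unit ≫ p := by rw [hup, Category.comp_id]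
        _ = hF.unit ≫ f.hom ≫ p := by rw [← Category.assoc, ← hfac, Category.assoc]
        _ = hF.unit ≫ p := by rw [h1]; simp
        _ = 𝟙 M := hup
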